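/- In the setting of the interval-private mean estimator: with Y ∈ [a,b], U ~ Uniform[a,b] independent of Y, and Δ = 1_{Y ≤ U}, the conditional expectation E[Δ(2U − b) + (1 − Δ)(2U − a) | Y] = Y almost surely. -/

import Mathlib

open MeasureTheory

lemma aux_int (a b : ℝ) (hab : a < b) (y : ℝ) (hy : y ∈ Set.Icc a b) :
    ∫ u, ((if y ≤ u then (1:ℝ) else 0) * (2 * u - b)
        + (1 - if y ≤ u then (1:ℝ) else 0) * (2 * u - a))
      ∂((ENNReal.ofReal (b - a))⁻¹ • volume.restrict (Set.Icc a b)) = y := by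
  have hba : (0:ℝ) < b - a := sub_pos.mpr hab
  have hfun : ∀ u : ℝ, (if y ≤ u then (1:ℝ) else 0) * (2 * u - b)
        + (1 - if y ≤ u then (1:ℝ) else 0) * (2 * u - a)
      = (2 * u - a) + Set.indicator (Set.Ici y) (fun _ => a - b) u := by
    intro u
    by_cases h : y ≤ u <;> simp [Set.indicator_apply, h] <;> ring
  simp_rw [hfun]
  rw [integral_smul_measure]
  have h1 : ∫ u in Set.Icc a b, (2 * u - a) = b * (b - a) := by
    rw [MeasureTheory.integral_Icc_eq_integral_Ioc, ← intervalIntegral.integral_of_le hab.le]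
    have : ∫ u in a..b, (2 * u - a) = (b^2 - a^2) - a * (b - a) := by
      rw [intervalIntegral.integral_sub (by apply IntervalIntegrable.const_mul; exact intervalIntegral.intervalIntegrable_id) (intervalIntegrable_const)]
      rw [intervalIntegral.integral_const_mul, integral_id, intervalIntegral.integral_const]
      simp [smul_eq_mul]
      ring
    rw [this]; ring
  have h2 : ∫ u in Set.Icc a b, Set.indicator (Set.Ici y) (fun _ => a - b) u
      = (a - b) * (b - y) := by
    rw [integral_indicator measurableSet_Ici]
    rw [Measure.restrict_restrict measurableSet_Ici]
    have : Set.Ici y ∩ Set.Icc a b = Set.Icc y b := by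
      ext x
      simp only [Set.mem_inter_iff, Set.mem_Ici, Set.mem_Icc]
      constructor
      · rintro ⟨h1, h2, h3⟩; exact ⟨h1, h3⟩
      · rintro ⟨h1, h2⟩; exact ⟨h1, hy.1.trans h1, h2⟩
    rw [this, setIntegral_const, measureReal_def, Real.volume_Icc, smul_eq_mul,
      ENNReal.toReal_ofReal (sub_nonneg.mpr hy.2), mul_comm]
  rw [integral_add, h1, h2]
  · rw [ENNReal.toReal_inv, ENNReal.toReal_ofReal hba.le, smul_eq_mul]
    field_simp
    ring
  · exact (continuous_const.mul continuous_id |>.sub continuous_const).integrableOn_Icc.integrable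
  · exact (integrable_const _).indicator measurableSet_Ici

/-- Conditional unbiasedness of a single interval-private observation:
`E[Δ(2U-b) + (1-Δ)(2U-a) | Y] = Y` almost surely. -/
theorem stmt_7 {Ω : Type*} [m0 : MeasurableSpace Ω] (P : Measure Ω) [IsProbabilityMeasure P]
    (a b : ℝ) (hab : a < b) (Y U : Ω → ℝ)
    (hY : Measurable Y) (hU : Measurable U)
    (hYab : ∀ ω, Y ω ∈ Set.Icc a b)
    (hUunif : Measure.map U P
      = (ENNReal.ofReal (b - a))⁻¹ • volume.restrict (Set.Icc a b))
    (hindep : ProbabilityTheory.IndepFun Y U P) :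
    P[fun ω => (if Y ω ≤ U ω then (1:ℝ) else 0) * (2 * U ω - b)
        + (1 - if Y ω ≤ U ω then (1:ℝ) else 0) * (2 * U ω - a)
      | MeasurableSpace.comap Y (borel ℝ)] =ᵐ[P] Y := by
  set μU : Measure ℝ := (ENNReal.ofReal (b - a))⁻¹ • volume.restrict (Set.Icc a b) with hμU
  set μY : Measure ℝ := Measure.map Y P with hμY
  have hm : (MeasurableSpace.comap Y (borel ℝ)) ≤ m0 := hY.comap_le
  haveI : SigmaFinite (P.trim hm) := by
    have : IsFiniteMeasure (P.trim hm) := isFiniteMeasure_trim hm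
    infer_instance
  set f : Ω → ℝ := fun ω => (if Y ω ≤ U ω then (1:ℝ) else 0) * (2 * U ω - b)
        + (1 - if Y ω ≤ U ω then (1:ℝ) else 0) * (2 * U ω - a) with hf
  set F : ℝ × ℝ → ℝ := fun p => (if p.1 ≤ p.2 then (1:ℝ) else 0) * (2 * p.2 - b)
        + (1 - if p.1 ≤ p.2 then (1:ℝ) else 0) * (2 * p.2 - a) with hF
  have hite : Measurable fun p : ℝ × ℝ => if p.1 ≤ p.2 then (1:ℝ) else 0 :=
    Measurable.ite (measurableSet_le measurable_fst measurable_snd) measurable_const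
      measurable_const
  have hFmeas : Measurable F := by
    exact (hite.mul ((measurable_const.mul measurable_snd).sub measurable_const)).add
      (((measurable_const.sub hite)).mul
        ((measurable_const.mul measurable_snd).sub measurable_const))
  -- a.e. U in Icc
  have hUmem : ∀ᵐ ω ∂P, U ω ∈ Set.Icc a b := by
    have h0 : P (U ⁻¹' (Set.Icc a b)ᶜ) = 0 := by
      rw [← Measure.map_apply hU measurableSet_Icc.compl, hUunif]
      rw [Measure.smul_apply, Measure.restrict_apply measurableSet_Icc.compl]
      simp
    filter_upwards [measure_eq_zero_iff_ae_notMem.mp h0] with ω hω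
    simpa using hω
  have hC : ∀ p : ℝ × ℝ, p.2 ∈ Set.Icc a b → ‖F p‖ ≤ 3 * (|a| + |b|) := by
    rintro ⟨y, u⟩ ⟨h1, h2⟩
    have ha1 := neg_abs_le a
    have ha2 := le_abs_self a
    have hb1 := neg_abs_le b
    have hb2 := le_abs_self b
    have hu : |u| ≤ |a| + |b| := abs_le.mpr ⟨by nlinarith [abs_nonneg b], by nlinarith [abs_nonneg a]⟩
    obtain ⟨hu1, hu2⟩ := abs_le.mp hu
    by_cases h : y ≤ u <;> simp [hF, h, Real.norm_eq_abs, abs_le] <;> constructor <;> nlinarith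
  have hfmeas : Measurable f := hFmeas.comp (hY.prodMk hU)
  have hfint : Integrable f P := by
    refine (integrable_const (3 * (|a| + |b|))).mono' hfmeas.aestronglyMeasurable ?_
    filter_upwards [hUmem] with ω hω
    exact hC (Y ω, U ω) hω
  have hYint : Integrable Y P := by
    refine (integrable_const (|a| + |b|)).mono' hY.aestronglyMeasurable ?_
    filter_upwards with ω
    obtain ⟨h1, h2⟩ := hYab ω
    rw [Real.norm_eq_abs, abs_le]
    constructor <;> nlinarith [neg_abs_le a, le_abs_self b, abs_nonneg a, abs_nonneg b]
  have hYcm : Measurable[(MeasurableSpace.comap Y (borel ℝ))] Y := fun t ht => ⟨t, ht, rfl⟩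
  have hYsm : AEStronglyMeasurable[MeasurableSpace.comap Y (borel ℝ)] Y P :=
    (hYcm.stronglyMeasurable).aestronglyMeasurable
  haveI hPU : IsProbabilityMeasure μU := hUunif ▸ Measure.isProbabilityMeasure_map hU.aemeasurable
  haveI hPY : IsProbabilityMeasure μY := Measure.isProbabilityMeasure_map hY.aemeasurable
  have hμUc : μU (Set.Icc a b)ᶜ = 0 := by
    rw [hμU, Measure.smul_apply, Measure.restrict_apply measurableSet_Icc.compl]
    simp
  have hprod : Measure.map (fun ω => (Y ω, U ω)) P = μY.prod μU := by
    rw [← hUunif]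
    exact (ProbabilityTheory.indepFun_iff_map_prod_eq_prod_map_map hY.aemeasurable
      hU.aemeasurable).mp hindep
  have hg_eq : ∀ s : Set Ω, MeasurableSet[(MeasurableSpace.comap Y (borel ℝ))] s → P s < ⊤ →
      ∫ x in s, Y x ∂P = ∫ x in s, f x ∂P := by
    rintro s ⟨A, hA, rfl⟩ -
    have hA' : MeasurableSet A := hA
    set G : ℝ × ℝ → ℝ := fun p => Set.indicator A (fun _ => (1:ℝ)) p.1 * F p with hG
    have hGmeas : Measurable G :=
      ((measurable_const.indicator hA').comp measurable_fst).mul hFmeas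
    have hae2 : ∀ᵐ p ∂(μY.prod μU), p.2 ∈ Set.Icc a b := by
      rw [ae_iff]
      have he : {p : ℝ × ℝ | ¬ p.2 ∈ Set.Icc a b} = Set.univ ×ˢ (Set.Icc a b)ᶜ := by
        ext p; simp
      rw [he, Measure.prod_prod, hμUc]
      simp
    have hGint : Integrable G (μY.prod μU) := by
      refine (integrable_const (3 * (|a| + |b|))).mono' hGmeas.aestronglyMeasurable ?_
      filter_upwards [hae2] with p hp
      rw [hG]
      simp only [norm_mul]
      calc ‖Set.indicator A (fun _ => (1:ℝ)) p.1‖ * ‖F p‖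
          ≤ 1 * ‖F p‖ := by
            apply mul_le_mul_of_nonneg_right _ (norm_nonneg _)
            by_cases h : p.1 ∈ A <;> simp [Set.indicator_apply, h]
        _ = ‖F p‖ := one_mul _
        _ ≤ 3 * (|a| + |b|) := hC p hp
    have step1 : ∫ x in Y ⁻¹' A, f x ∂P = ∫ ω, G (Y ω, U ω) ∂P := by
      rw [← integral_indicator (hY hA')]
      congr 1
      ext ω
      by_cases h : Y ω ∈ A <;> simp [hG, Set.indicator_apply, h] <;> rfl
    have step2 : ∫ ω, G (Y ω, U ω) ∂P = ∫ p, G p ∂(μY.prod μU) := by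
      rw [← hprod]
      exact (integral_map (hY.prodMk hU).aemeasurable hGmeas.aestronglyMeasurable).symm
    have hYae : ∀ᵐ y ∂μY, y ∈ Set.Icc a b := by
      rw [hμY]
      exact (ae_map_iff hY.aemeasurable measurableSet_Icc).mpr
        (Filter.Eventually.of_forall hYab)
    have step3 : ∫ p, G p ∂(μY.prod μU) = ∫ y, Set.indicator A (fun _ => (1:ℝ)) y * y ∂μY := by
      rw [integral_prod _ hGint]
      refine integral_congr_ae ?_
      filter_upwards [hYae] with y hy
      have : ∀ u, G (y, u) = Set.indicator A (fun _ => (1:ℝ)) y *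
          ((if y ≤ u then (1:ℝ) else 0) * (2 * u - b)
            + (1 - if y ≤ u then (1:ℝ) else 0) * (2 * u - a)) := fun u => rfl
      simp_rw [this]
      rw [integral_const_mul, hμU, aux_int a b hab y hy]
    have step4 : ∫ y, Set.indicator A (fun _ => (1:ℝ)) y * y ∂μY
        = ∫ x in Y ⁻¹' A, Y x ∂P := by
      have : ∀ y : ℝ, Set.indicator A (fun _ => (1:ℝ)) y * y
          = Set.indicator A (fun z => z) y := by
        intro y; by_cases h : y ∈ A <;> simp [Set.indicator_apply, h]
      simp_rw [this]
      rw [integral_indicator hA', hμY]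
      exact setIntegral_map hA' measurable_id.aestronglyMeasurable hY.aemeasurable
    rw [step1, step2, step3, step4]
  exact (ae_eq_condExp_of_forall_setIntegral_eq hm hfint
    (fun s _ _ => hYint.integrableOn) hg_eq hYsm).symm
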